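/- (Theorem 2, CCRB for nonmaximal support with full-column-rank sensing matrix.) Let A be an m×n real matrix with linearly independent columns (so AᵀA is invertible), let x ∈ ℝⁿ, σₑ ≥ 0, σₙ ≥ 0 with σ_x² := σₑ²‖x‖₂² + σₙ² > 0, and set J = (1/σ_x²)·[AᵀA + 2mσₑ⁴·x xᵀ/σ_x²]. Then J is invertible and tr(J⁻¹) = σ_x²·[ tr((AᵀA)⁻¹) − 2mσₑ⁴·‖(AᵀA)⁻¹x‖₂² / (σ_x² + 2mσₑ⁴·xᵀ(AᵀA)⁻¹x) ]. -/

import Mathlib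

open Matrix

lemma myMul_vecMulVec {n p : ℕ} (M : Matrix (Fin n) (Fin n) ℝ) (u : Fin n → ℝ) (v : Fin p → ℝ) :
    M * vecMulVec u v = vecMulVec (M *ᵥ u) v := by
  ext i j
  simp [mul_apply, vecMulVec_apply, mulVec, dotProduct, Finset.sum_mul, mul_assoc]

lemma myVecMulVec_mul {n p : ℕ} (u : Fin p → ℝ) (v : Fin n → ℝ) (M : Matrix (Fin n) (Fin n) ℝ) :
    vecMulVec u v * M = vecMulVec u (v ᵥ* M) := by
  ext i j
  simp [mul_apply, vecMulVec_apply, vecMul, dotProduct, Finset.mul_sum, mul_assoc]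

lemma myTrace_vecMulVec {n : ℕ} (u v : Fin n → ℝ) :
    (vecMulVec u v).trace = u ⬝ᵥ v := by
  simp [trace, diag, vecMulVec_apply, dotProduct]

lemma myVecMulVec_mul_vecMulVec {n : ℕ} (u v w z : Fin n → ℝ) :
    vecMulVec u v * vecMulVec w z = (v ⬝ᵥ w) • vecMulVec u z := by
  ext i j
  simp [mul_apply, vecMulVec_apply, dotProduct, Finset.sum_mul, Finset.mul_sum]
  ring_nf
  congr 1; ext k; ring

theorem ccrb_nonmaximal_support
    {m n : ℕ} (A : Matrix (Fin m) (Fin n) ℝ)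
    (hindep : LinearIndependent ℝ (fun j : Fin n => fun k : Fin m => A k j))
    (x : Fin n → ℝ) (σe σn : ℝ) (hσe : 0 ≤ σe) (hσn : 0 ≤ σn)
    (σx2 : ℝ) (hσx2 : σx2 = σe ^ 2 * ∑ i, x i ^ 2 + σn ^ 2) (hσx2pos : 0 < σx2)
    (J : Matrix (Fin n) (Fin n) ℝ)
    (hJ : J = (1 / σx2) • (Aᵀ * A + (2 * m * σe ^ 4 / σx2) • vecMulVec x x)) :
    IsUnit J ∧
    (J⁻¹).trace
      = σx2 * (((Aᵀ * A)⁻¹).trace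
          - 2 * m * σe ^ 4 * (∑ i, (((Aᵀ * A)⁻¹ *ᵥ x) i) ^ 2)
            / (σx2 + 2 * m * σe ^ 4 * (x ⬝ᵥ (Aᵀ * A)⁻¹ *ᵥ x))) := by
  set B := Aᵀ * A with hBdef
  -- B is positive definite
  have hBpd : B.PosDef := by
    refine posDef_iff_dotProduct_mulVec.mpr ⟨?_, fun v hv => ?_⟩
    · have h := isHermitian_conjTranspose_mul_self A
      simpa using h
    · have hAv : A *ᵥ v ≠ 0 := by
        intro h0
        apply hv
        have := Fintype.linearIndependent_iff.mp hindep v ?_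
        · funext i; exact this i
        · funext k
          have := congrFun h0 k
          simpa [mulVec, dotProduct, mul_comm] using this
      have hval : star v ⬝ᵥ (B *ᵥ v) = (A *ᵥ v) ⬝ᵥ (A *ᵥ v) := by
        simp only [star_trivial, hBdef]
        rw [← mulVec_mulVec, dotProduct_mulVec, vecMul_transpose]
      rw [hval]
      rcases Function.ne_iff.mp hAv with ⟨k, hk⟩
      have : 0 < ∑ i, (A *ᵥ v) i * (A *ᵥ v) i := by
        apply Finset.sum_pos' (fun i _ => mul_self_nonneg _)
        exact ⟨k, Finset.mem_univ _, mul_self_pos.mpr hk⟩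
      simpa [dotProduct] using this
  have hBdetd : IsUnit B.det := (Matrix.isUnit_iff_isUnit_det _).mp hBpd.isUnit
  have hBinvsym : (B⁻¹)ᵀ = B⁻¹ := by
    rw [Matrix.transpose_nonsing_inv]
    congr 1
    rw [hBdef, transpose_mul, transpose_transpose]
  set u : Fin n → ℝ := B⁻¹ *ᵥ x with hudef
  have hvm : x ᵥ* B⁻¹ = u := by
    rw [hudef, ← hBinvsym, vecMul_transpose, hBinvsym]
  set q : ℝ := x ⬝ᵥ u with hqdef
  have hq : 0 ≤ q := by
    have := (posSemidef_iff_dotProduct_mulVec.mp hBpd.inv.posSemidef).2 x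
    simpa [hqdef, hudef] using this
  set t : ℝ := 2 * m * σe ^ 4 with htdef
  have ht : 0 ≤ t := by rw [htdef]; positivity
  set c : ℝ := t / σx2 with hcdef
  have hc : 0 ≤ c := by rw [hcdef]; positivity
  have hcq : c * q = t * q / σx2 := by rw [hcdef]; ring
  have hD : (0:ℝ) < 1 + c * q := by nlinarith
  set d : ℝ := c / (1 + c * q) with hddef
  set V : Matrix (Fin n) (Fin n) ℝ := vecMulVec x x with hVdef
  set N : Matrix (Fin n) (Fin n) ℝ := B⁻¹ - d • (B⁻¹ * (V * B⁻¹)) with hNdef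
  have h2 : B * (B⁻¹ * (V * B⁻¹)) = V * B⁻¹ := by
    rw [← Matrix.mul_assoc, Matrix.mul_nonsing_inv _ hBdetd, Matrix.one_mul]
  have hqd : (x ᵥ* B⁻¹) ⬝ᵥ x = q := by
    rw [hvm, hqdef, hudef]
    simp [dotProduct, mulVec, Finset.mul_sum, Finset.sum_mul, mul_comm]
  have h1 : V * (B⁻¹ * (V * B⁻¹)) = q • (V * B⁻¹) := by
    rw [← Matrix.mul_assoc, ← Matrix.mul_assoc, hVdef, myVecMulVec_mul,
      myVecMulVec_mul_vecMulVec, Matrix.smul_mul, hqd, ← myVecMulVec_mul]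
  have hscal : c - d - c * (d * q) = 0 := by
    rw [hddef]
    field_simp
    ring
  have hMN : (B + c • V) * N = 1 := by
    calc (B + c • V) * N
        = B * B⁻¹ + c • (V * B⁻¹) - d • (B * (B⁻¹ * (V * B⁻¹)))
            - (c * d) • (V * (B⁻¹ * (V * B⁻¹))) := by
          rw [hNdef]
          simp only [Matrix.mul_sub, Matrix.add_mul, Matrix.mul_smul, Matrix.smul_mul,
            smul_smul]
          module
      _ = 1 + c • (V * B⁻¹) - d • (V * B⁻¹) - (c * (d * q)) • (V * B⁻¹) := by
          rw [h2, h1, Matrix.mul_nonsing_inv _ hBdetd, smul_smul, mul_assoc]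
      _ = 1 + (c - d - c * (d * q)) • (V * B⁻¹) := by
          rw [sub_smul, sub_smul]
          abel
      _ = 1 := by rw [hscal, zero_smul, add_zero]
  have key : J * (σx2 • N) = 1 := by
    rw [hJ, Matrix.smul_mul, Matrix.mul_smul, smul_smul,
      show (1 / σx2 * σx2 : ℝ) = 1 by field_simp, one_smul]
    exact hMN
  have hJunit : IsUnit J := by
    rw [Matrix.isUnit_iff_isUnit_det]
    exact Matrix.isUnit_det_of_right_inverse key
  have hJinv : J⁻¹ = σx2 • N := Matrix.inv_eq_right_inv key
  refine ⟨hJunit, ?_⟩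
  rw [hJinv]
  have htr : N.trace = B⁻¹.trace - d * (u ⬝ᵥ u) := by
    rw [hNdef, trace_sub, trace_smul, smul_eq_mul]
    congr 2
    rw [hVdef, myVecMulVec_mul, myMul_vecMulVec, hvm, ← hudef,
      myTrace_vecMulVec]
  rw [trace_smul, smul_eq_mul, htr]
  have huu : u ⬝ᵥ u = ∑ i, u i ^ 2 := by
    simp [dotProduct, sq]
  rw [huu]
  have hden : σx2 + t * q ≠ 0 := by nlinarith
  have harith : d = t / (σx2 + t * q) := by
    rw [hddef, hcdef]
    field_simp
  rw [harith]
  ring
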